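/- Let G = (V,E) be a finite graph and let a, b be two distinct vertices that have the same set of neighbors (in particular a and b are non-adjacent). Then the multivariate independent set polynomial satisfies I(G; x) = I(G - b; y), where y_a = (1 + x_a)(1 + x_b) - 1 and y_v = x_v for all vertices v ∉ {a, b}. -/

import Mathlib

open Finset
open scoped Classical

/-- A finset of vertices is independent in `G` if no two of its members are adjacent. -/
def IndepSet {V : Type*} (G : SimpleGraph V) (A : Finset V) : Prop :=
  ∀ u ∈ A, ∀ v ∈ A, ¬ G.Adj u v

/-- The multivariate independent set polynomial `I(G; x)`, evaluated at real vertex weights. -/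
noncomputable def indPoly {V : Type*} [Fintype V] (G : SimpleGraph V) (x : V → ℝ) : ℝ :=
  ∑ A : Finset V, if IndepSet G A then ∏ v ∈ A, x v else 0

/-- The independent set polynomial of `G - b` (vertex `b` deleted): sum over independent
sets avoiding `b` (independence in `G - b` agrees with independence in `G` for such sets). -/
noncomputable def indPolyDel {V : Type*} [Fintype V] [DecidableEq V]
    (G : SimpleGraph V) (b : V) (y : V → ℝ) : ℝ :=
  ∑ A ∈ (Finset.univ.erase b).powerset, if IndepSet G A then ∏ v ∈ A, y v else 0

lemma indep_insert {V : Type*} [DecidableEq V] (G : SimpleGraph V) (A : Finset V) (u : V) :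
    IndepSet G (insert u A) ↔ IndepSet G A ∧ ∀ v ∈ A, ¬ G.Adj u v := by
  constructor
  · intro h
    exact ⟨fun p hp q hq => h p (mem_insert_of_mem hp) q (mem_insert_of_mem hq),
      fun v hv => h u (mem_insert_self u A) v (mem_insert_of_mem hv)⟩
  · rintro ⟨h1, h2⟩ p hp q hq hadj
    rcases mem_insert.1 hp with h | hp' <;> rcases mem_insert.1 hq with h' | hq'
    · exact G.loopless.irrefl _ (h ▸ h' ▸ hadj)
    · exact h2 q hq' (h ▸ hadj)
    · exact h2 p hp' (h' ▸ hadj).symm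
    · exact h1 p hp' q hq' hadj


/-- Twin reduction: if `a ≠ b` are non-adjacent vertices with the same set of neighbors,
then `I(G; x) = I(G - b; y)` with `y_a = (1 + x_a)(1 + x_b) - 1` and `y_v = x_v` otherwise. -/
theorem twin_reduction {V : Type*} [Fintype V] [DecidableEq V]
    (G : SimpleGraph V) (a b : V) (hab : a ≠ b) (hnadj : ¬ G.Adj a b)
    (htwin : G.neighborSet a = G.neighborSet b) (x : V → ℝ) :
    indPoly G x = indPolyDel G b (Function.update x a ((1 + x a) * (1 + x b) - 1)) := by
  set y : V → ℝ := Function.update x a ((1 + x a) * (1 + x b) - 1) with hy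
  set f : Finset V → ℝ := fun A => if IndepSet G A then ∏ v ∈ A, x v else 0 with hf
  set g : Finset V → ℝ := fun A => if IndepSet G A then ∏ v ∈ A, y v else 0 with hg
  set s : Finset V := (Finset.univ.erase b).erase a with hs
  have has : a ∉ s := notMem_erase a _
  have hbs : b ∉ s := fun h => notMem_erase b _ (mem_of_mem_erase h)
  have hbas : b ∉ insert a s := by
    intro h
    rcases mem_insert.1 h with h' | h'
    · exact hab h'.symm
    · exact hbs h'
  have huniv : (Finset.univ : Finset V) = insert b (insert a s) := by
    rw [hs, insert_erase (mem_erase.2 ⟨hab, mem_univ a⟩), insert_erase (mem_univ b)]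
  have heb : (Finset.univ.erase b : Finset V) = insert a s := by
    rw [hs, insert_erase (mem_erase.2 ⟨hab, mem_univ a⟩)]
  have hadjiff : ∀ v, G.Adj a v ↔ G.Adj b v := by
    intro v
    have := Set.ext_iff.1 htwin v
    simpa [SimpleGraph.mem_neighborSet] using this
  have key : ∀ A ∈ s.powerset,
      f A = g A ∧ f (insert a A) + (f (insert b A) + f (insert b (insert a A))) = g (insert a A) := by
    intro A hA
    rw [mem_powerset] at hA
    have haA : a ∉ A := fun h => has (hA h)
    have hbA : b ∉ A := fun h => hbs (hA h)
    have hprod : ∏ v ∈ A, y v = ∏ v ∈ A, x v :=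
      Finset.prod_congr rfl fun v hv => Function.update_of_ne (fun h => haA (by rw [← h]; exact hv)) _ x
    constructor
    · simp only [hf, hg, hprod]
    · have hia : IndepSet G (insert a A) ↔ IndepSet G A ∧ ∀ v ∈ A, ¬ G.Adj a v :=
        indep_insert G A a
      have hib : IndepSet G (insert b A) ↔ IndepSet G (insert a A) := by
        rw [indep_insert, hia]
        refine and_congr_right fun _ => ?_
        exact ⟨fun h v hv hadj => h v hv ((hadjiff v).1 hadj),
               fun h v hv hadj => h v hv ((hadjiff v).2 hadj)⟩
      have hiab : IndepSet G (insert b (insert a A)) ↔ IndepSet G (insert a A) := by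
        rw [indep_insert]
        constructor
        · exact fun h => h.1
        · intro h
          refine ⟨h, fun v hv hadj => ?_⟩
          rcases mem_insert.1 hv with h' | hv'
          · exact hnadj (h' ▸ hadj).symm
          · exact (hia.1 h).2 v hv' ((hadjiff v).2 hadj)
      have pa : ∏ v ∈ insert a A, x v = x a * ∏ v ∈ A, x v := prod_insert haA
      have pb : ∏ v ∈ insert b A, x v = x b * ∏ v ∈ A, x v := prod_insert hbA
      have pab : ∏ v ∈ insert b (insert a A), x v = x b * (x a * ∏ v ∈ A, x v) := by
        rw [prod_insert (by
          intro h
          rcases mem_insert.1 h with h' | h'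
          · exact hab h'.symm
          · exact hbA h'), pa]
      have pya : ∏ v ∈ insert a A, y v = ((1 + x a) * (1 + x b) - 1) * ∏ v ∈ A, x v := by
        rw [prod_insert haA, hprod, hy, Function.update_self]
      simp only [hf, hg, hib, hiab, pa, pb, pab, pya]
      by_cases h : IndepSet G (insert a A)
      · simp only [if_pos h]; ring
      · simp only [if_neg h]; ring
  have h0 : indPoly G x = ∑ A ∈ (Finset.univ : Finset V).powerset, f A := by
    rw [powerset_univ]; rfl
  have h1 : indPolyDel G b y = ∑ A ∈ (insert a s).powerset, g A := by
    rw [indPolyDel, heb]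
  rw [h0, h1, huniv, Finset.sum_powerset_insert hbas, Finset.sum_powerset_insert has,
    Finset.sum_powerset_insert has (fun t => f (insert b t)),
    Finset.sum_powerset_insert has]
  have e : ∀ A ∈ s.powerset,
      (f A + f (insert a A)) + (f (insert b A) + f (insert b (insert a A)))
        = g A + g (insert a A) := by
    intro A hA
    obtain ⟨k1, k2⟩ := key A hA
    rw [k1]
    linarith
  calc (∑ A ∈ s.powerset, f A + ∑ A ∈ s.powerset, f (insert a A))
        + (∑ A ∈ s.powerset, f (insert b A) + ∑ A ∈ s.powerset, f (insert b (insert a A)))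
      = ∑ A ∈ s.powerset, ((f A + f (insert a A)) + (f (insert b A) + f (insert b (insert a A)))) := by
        rw [Finset.sum_add_distrib, Finset.sum_add_distrib, Finset.sum_add_distrib]
    _ = ∑ A ∈ s.powerset, (g A + g (insert a A)) := Finset.sum_congr rfl e
    _ = ∑ A ∈ s.powerset, g A + ∑ A ∈ s.powerset, g (insert a A) := Finset.sum_add_distrib
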